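/- For every minimal Cantor system (X,T), the group of additive continuous eigenvalues E(X,T) is a subgroup of the image subgroup I(X,T): for every α ∈ E(X,T) and every μ ∈ M(X,T), there exists f ∈ C(X,ℤ) with ∫ f dμ = α. -/

import Mathlib

open Complex MeasureTheory

lemma exists_log_lift {X : Type*} [TopologicalSpace X] [CompactSpace X] [T2Space X]
    [TotallyDisconnectedSpace X] [Nonempty X]
    (f : X → ℂ) (hf : Continuous f) (h0 : ∀ x, f x ≠ 0) :
    ∃ H : X → ℂ, Continuous H ∧ ∀ x, Complex.exp (H x) = f x := by
  classical
  -- minimum of ‖f‖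
  obtain ⟨x₀, -, hx₀⟩ := isCompact_univ.exists_isMinOn Set.univ_nonempty
    (hf.norm.continuousOn)
  set c : ℝ := ‖f x₀‖ with hc
  have hcpos : 0 < c := norm_pos_iff.mpr (h0 x₀)
  have hcle : ∀ y, c ≤ ‖f y‖ := fun y => hx₀ (Set.mem_univ y)
  -- clopen sets
  have key : ∀ x : X, ∃ V : Set X, IsClopen V ∧ x ∈ V ∧ ∀ y ∈ V, ‖f y - f x‖ < c/4 := by
    intro x
    have hopen : IsOpen {y | ‖f y - f x‖ < c/4} :=
      isOpen_lt (by fun_prop) continuous_const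
    obtain ⟨V, hV, hxV, hVsub⟩ := compact_exists_isClopen_in_isOpen hopen
      (by simp [hcpos] : x ∈ {y | ‖f y - f x‖ < c/4})
    exact ⟨V, hV, hxV, fun y hy => hVsub hy⟩
  choose V hVclopen hVmem hVsmall using key
  obtain ⟨t, ht⟩ := isCompact_univ.elim_finite_subcover V (fun x => (hVclopen x).2)
    (fun y _ => Set.mem_iUnion.mpr ⟨y, hVmem y⟩)
  -- setoid whose classes are the atoms of the finite clopen family
  let s : Setoid X := ⟨fun y z => ∀ i ∈ t, (y ∈ V i ↔ z ∈ V i),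
    ⟨fun _ _ _ => Iff.rfl, fun h i hi => (h i hi).symm,
     fun h h' i hi => (h i hi).trans (h' i hi)⟩⟩
  let g : X → ℂ := fun y => f (Quotient.out (Quotient.mk s y))
  have hrel : ∀ y : X, s.r y (Quotient.out (Quotient.mk s y)) := by
    intro y
    exact Quotient.exact (Quotient.out_eq (Quotient.mk s y)).symm
  -- g is locally constant
  have hgl : IsLocallyConstant g := by
    rw [IsLocallyConstant.iff_exists_open]
    intro x
    refine ⟨⋂ i ∈ t, if x ∈ V i then V i else (V i)ᶜ, ?_, ?_, ?_⟩
    · exact isOpen_biInter_finset (fun i _ => by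
        split_ifs
        · exact (hVclopen i).2
        · exact (hVclopen i).1.isOpen_compl)
    · exact Set.mem_biInter (fun i _ => by split_ifs with h <;> simp [h])
    · intro y hy
      have hyx : s.r x y := by
        intro i hi
        have h2 := Set.mem_iInter₂.mp hy i hi
        constructor
        · intro hx; simpa [hx] using h2
        · intro hyi
          by_contra hx
          rw [if_neg hx] at h2
          exact hx (by simpa using (h2 hyi).elim)
      have : Quotient.mk s y = Quotient.mk s x := Quotient.sound (fun i hi => (hyx i hi).symm)
      simp only [g, this]
  have hgc : Continuous g := hgl.continuous
  -- g is close to f and nonvanishing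
  have hclose : ∀ y, ‖f y - g y‖ < c/2 := by
    intro y
    obtain ⟨i, hit, hiy⟩ : ∃ i ∈ t, y ∈ V i := by
      simpa using ht (Set.mem_univ y)
    have h1 : Quotient.out (Quotient.mk s y) ∈ V i := (hrel y i hit).mp hiy
    calc ‖f y - g y‖ = ‖(f y - f i) + (f i - g y)‖ := by ring_nf
      _ ≤ ‖f y - f i‖ + ‖f i - g y‖ := norm_add_le _ _
      _ < c/4 + c/4 := by
          refine add_lt_add (hVsmall i y hiy) ?_
          rw [norm_sub_rev]
          exact hVsmall i _ h1
      _ = c/2 := by ring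
  have hg0 : ∀ y, g y ≠ 0 := fun y => h0 _
  have hgnorm : ∀ y, c ≤ ‖g y‖ := fun y => hcle _
  -- the quotient f/g lands in the right half plane
  have hre : ∀ y, 0 < (f y / g y).re := by
    intro y
    have h1 : ‖f y / g y - 1‖ < 1 := by
      rw [show f y / g y - 1 = (f y - g y)/(g y) by field_simp [hg0 y], norm_div,
        div_lt_one (by simpa [norm_pos_iff] using hg0 y)]
      calc ‖f y - g y‖ < c/2 := hclose y
        _ < c := by linarith
        _ ≤ ‖g y‖ := hgnorm y
    set u := f y / g y
    have h2 : ‖u-1‖^2 < 1 := by nlinarith [norm_nonneg (u-1)]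
    rw [Complex.sq_norm, Complex.normSq_apply] at h2
    simp only [Complex.sub_re, Complex.sub_im, Complex.one_re, Complex.one_im, sub_zero] at h2
    nlinarith [sq_nonneg u.im]
  refine ⟨fun y => Complex.log (g y) + Complex.log (f y / g y), ?_, ?_⟩
  · refine Continuous.add ?_ ?_
    · exact ((hgl.comp Complex.log).continuous)
    · refine continuous_iff_continuousAt.mpr (fun y => ?_)
      exact ContinuousAt.clog ((hf.div hgc hg0).continuousAt) (Or.inl (hre y))
  · intro y
    rw [Complex.exp_add, Complex.exp_log (hg0 y), Complex.exp_log (div_ne_zero (h0 y) (hg0 y))]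
    field_simp [hg0 y]


/-- For every minimal Cantor system `(X,T)`, the group of additive continuous
eigenvalues `E(X,T)` is contained in the image subgroup `I(X,T)`: for every `α ∈ E(X,T)`
and every invariant probability measure `μ`, there is `f ∈ C(X,ℤ)` with `∫ f dμ = α`. -/
theorem stmt1 {X : Type*} [TopologicalSpace X] [CompactSpace X]
    [TopologicalSpace.MetrizableSpace X]
    [TotallyDisconnectedSpace X] [Nonempty X] [MeasurableSpace X] [BorelSpace X]
    (hni : ∀ x : X, ¬IsOpen ({x} : Set X))
    (T : X ≃ₜ X)
    (hmin : ∀ x : X, Dense (Set.range fun n : ℤ => (T.toEquiv ^ n) x))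
    (α : ℝ)
    (hα : ∃ f : C(X, ℂ), f ≠ 0 ∧
      ∀ x : X, f (T x) = Complex.exp (2 * Real.pi * Complex.I * α) * f x)
    (μ : Measure X) (hμ : IsProbabilityMeasure μ) (hinv : Measure.map T μ = μ) :
    ∃ f : C(X, ℤ), ∫ x, (f x : ℝ) ∂μ = α := by
  classical
  haveI : T2Space X := inferInstance
  obtain ⟨F, hF0, hFeq⟩ := hα
  -- the norm of F is invariant
  have hstep : ∀ x : X, ‖F (T x)‖ = ‖F x‖ := by
    intro x
    rw [hFeq x]
    simp [map_mul, Complex.norm_exp]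
  have hinvstep : ∀ x : X, ‖F (T.symm x)‖ = ‖F x‖ := by
    intro x
    conv_rhs => rw [show x = T (T.symm x) from (T.apply_symm_apply x).symm]
    exact (hstep (T.symm x)).symm
  have horb : ∀ (n : ℤ) (x : X), ‖F ((T.toEquiv ^ n) x)‖ = ‖F x‖ := by
    intro n
    induction n using Int.induction_on with
    | zero => intro x; simp
    | succ n ih =>
        intro x
        have h1 : (T.toEquiv ^ ((n : ℤ) + 1)) x = (T.toEquiv ^ (n : ℤ)) (T x) := by
          rw [zpow_add_one]
          rfl
        rw [h1, ih (T x), hstep x]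
    | pred n ih =>
        intro x
        have h1 : (T.toEquiv ^ (-(n : ℤ) - 1)) x = (T.toEquiv ^ (-(n : ℤ))) (T.symm x) := by
          rw [zpow_sub_one]
          rfl
        rw [h1, ih (T.symm x), hinvstep x]
  -- F never vanishes
  obtain ⟨x₀, hx₀⟩ : ∃ x₀, F x₀ ≠ 0 := by
    by_contra h
    push_neg at h
    exact hF0 (ContinuousMap.ext fun x => by simp [h x])
  have hnz : ∀ x, F x ≠ 0 := by
    have hEq : (fun y => ‖F y‖) = fun _ => ‖F x₀‖ := by
      refine Continuous.ext_on (hmin x₀) (F.continuous.norm) continuous_const ?_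
      rintro y ⟨n, rfl⟩
      exact horb n x₀
    intro x
    have : ‖F x‖ = ‖F x₀‖ := congrFun hEq x
    rw [← norm_pos_iff, this, norm_pos_iff]
    exact hx₀
  -- logarithm lift
  obtain ⟨H, hHc, hHexp⟩ := exists_log_lift (fun x => F x) F.continuous hnz
  have hπ : (0:ℝ) < Real.pi := Real.pi_pos
  -- the cocycle equation
  have key : ∀ x : X, ∃ n : ℤ,
      (H (T x)).im - (H x).im = 2 * Real.pi * α + n * (2 * Real.pi) := by
    intro x
    have h1 : Complex.exp (H (T x)) = Complex.exp (2 * Real.pi * Complex.I * α + H x) := by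
      rw [hHexp (T x), Complex.exp_add, hHexp x, hFeq x]
    obtain ⟨n, hn⟩ := Complex.exp_eq_exp_iff_exists_int.mp h1
    refine ⟨n, ?_⟩
    have h2 := congrArg Complex.im hn
    simp only [Complex.add_im, Complex.mul_im, Complex.intCast_im, Complex.intCast_re,
      Complex.I_im, Complex.I_re, Complex.ofReal_im, Complex.ofReal_re] at h2
    push_cast at h2 ⊢
    simp at h2
    linarith [h2]
  set ψ : X → ℝ := fun x => ((H (T x)).im - (H x).im) / (2 * Real.pi) - α with hψdef
  have hψint : ∀ x : X, ∃ n : ℤ, ψ x = n := by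
    intro x
    obtain ⟨n, hn⟩ := key x
    refine ⟨n, ?_⟩
    rw [hψdef]
    field_simp [hn]
    rw [hn]; ring
  have hψc : Continuous ψ := by
    refine Continuous.sub (Continuous.div_const (Continuous.sub ?_ ?_) _) continuous_const
    · exact Complex.continuous_im.comp (hHc.comp T.continuous)
    · exact Complex.continuous_im.comp hHc
  set g : X → ℤ := fun x => round (ψ x) with hgdef
  have hgψ : ∀ x, (g x : ℝ) = ψ x := by
    intro x
    obtain ⟨n, hn⟩ := hψint x
    rw [hgdef]
    simp only [hn, round_intCast]
  have hgl : IsLocallyConstant g := by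
    clear_value ψ g
    rw [IsLocallyConstant.iff_exists_open]
    intro x
    refine ⟨ψ ⁻¹' Set.Ioo (ψ x - 1/2) (ψ x + 1/2), hψc.isOpen_preimage _ isOpen_Ioo,
      by simp, ?_⟩
    intro y hy
    obtain ⟨hy1, hy2⟩ := hy
    have h1 : |(g y : ℝ) - (g x : ℝ)| < 1 := by
      rw [hgψ, hgψ]
      rw [abs_lt]
      constructor <;> linarith
    have h2 : |g y - g x| < 1 := by
      have := h1
      rw [show (g y : ℝ) - (g x : ℝ) = ((g y - g x : ℤ) : ℝ) by push_cast; ring,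
        ← Int.cast_abs] at this
      exact_mod_cast this
    rw [abs_lt] at h2
    omega
  -- integrability
  have integ : ∀ (φ : X → ℝ), Continuous φ → Integrable φ μ := fun φ hφ =>
    hφ.integrable_of_hasCompactSupport (HasCompactSupport.of_compactSpace φ)
  have hT1c : Continuous fun x => (H (T x)).im :=
    Complex.continuous_im.comp (hHc.comp T.continuous)
  have hT0c : Continuous fun x => (H x).im := Complex.continuous_im.comp hHc
  -- invariance of the integral
  have hinvint : ∫ x, (H (T x)).im ∂μ = ∫ x, (H x).im ∂μ := by
    conv_rhs => rw [← hinv]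
    rw [integral_map T.continuous.aemeasurable hT0c.aestronglyMeasurable]
  have hψint' : ∫ x, ψ x ∂μ = -α := by
    rw [hψdef]
    beta_reduce
    rw [integral_sub ((integ (fun x => (H (T x)).im - (H x).im) (hT1c.sub hT0c)).div_const _) (integrable_const α)]
    rw [integral_div, integral_sub (integ _ hT1c) (integ _ hT0c), hinvint, sub_self,
      zero_div, integral_const]
    simp
  refine ⟨⟨fun x => -(g x), (hgl.neg).continuous⟩, ?_⟩
  have : (fun x => ((-(g x) : ℤ) : ℝ)) = fun x => -ψ x := by
    funext x
    push_cast
    rw [hgψ]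
  simp only [ContinuousMap.coe_mk]
  rw [show ∫ x, ((-(g x) : ℤ) : ℝ) ∂μ = ∫ x, -ψ x ∂μ by rw [this]]
  rw [integral_neg, hψint']
  ring
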